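/- Let K be a field, n ≥ 2 and s ≥ 1 integers, and a_1, …, a_s ∈ M_n(K). Then the K-subalgebra of M_n(K) generated by a_1, …, a_s is K-linearly spanned by the products a_{j_1}^{i_1} a_{j_2}^{i_2} ⋯ a_{j_p}^{i_p} with j_1, …, j_p ∈ {1, …, s}, with i_1 + ⋯ + i_p ≤ n² − 1, and with 1 ≤ i_r ≤ n − 1 for each r (the empty product, p = 0, being the identity matrix). -/

import Mathlib

open Matrix

noncomputable section

/-- The `n × n` matrix with `1`s on the superdiagonal and `0`s elsewhere. -/
def supDiag (K : Type*) [Semiring K] (n : ℕ) : Matrix (Fin n) (Fin n) K :=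
  Matrix.of fun i j => if (i : ℕ) + 1 = (j : ℕ) then 1 else 0

/-- The `n × n` matrix with `1`s on the subdiagonal and `0`s elsewhere. -/
def subDiag (K : Type*) [Semiring K] (n : ℕ) : Matrix (Fin n) (Fin n) K :=
  (supDiag K n).transpose

/-- Block index function for the `(ℓ, m)` block decomposition of `Fin (ℓ + m)`. -/
def blkIdx (ℓ m : ℕ) (i : Fin (ℓ + m)) : ℕ := if (i : ℕ) < ℓ then 0 else 1

/-- `E_{(ℓ,m)}(K)`: the `K`-subalgebra of `M_{ℓ+m}(K)` of block upper triangular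
matrices `[[a, b], [0, c]]` with `a ∈ M_ℓ(K)`, `b ∈ M_{ℓ×m}(K)`, `c ∈ M_m(K)`. -/
def Eblk (K : Type*) [CommRing K] (ℓ m : ℕ) :
    Subalgebra K (Matrix (Fin (ℓ + m)) (Fin (ℓ + m)) K) where
  carrier := { M | M.BlockTriangular (blkIdx ℓ m) }
  mul_mem' ha hb := ha.mul hb
  add_mem' ha hb := ha.add hb
  one_mem' := Matrix.blockTriangular_one
  algebraMap_mem' r := fun i j hij => by
    rw [Matrix.algebraMap_matrix_apply, if_neg]
    rintro rfl
    exact lt_irrefl _ hij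

/-- `T_{(ℓ,m)}(K)`: the set of block matrices `[[0, b], [0, 0]]` with `b ∈ M_{ℓ×m}(K)`. -/
def Tblk (K : Type*) [Semiring K] (ℓ m : ℕ) : Set (Matrix (Fin (ℓ + m)) (Fin (ℓ + m)) K) :=
  { M | ∀ i j : Fin (ℓ + m), ¬((i : ℕ) < ℓ ∧ ℓ ≤ (j : ℕ)) → M i j = 0 }

/-- `π_ℓ`: the upper-left `ℓ × ℓ` block of an `(ℓ+m) × (ℓ+m)` matrix. -/
def blkL (K : Type*) [Semiring K] (ℓ m : ℕ) (M : Matrix (Fin (ℓ + m)) (Fin (ℓ + m)) K) :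
    Matrix (Fin ℓ) (Fin ℓ) K :=
  Matrix.of fun i j => M (Fin.castAdd m i) (Fin.castAdd m j)

/-- `π_m`: the lower-right `m × m` block of an `(ℓ+m) × (ℓ+m)` matrix. -/
def blkR (K : Type*) [Semiring K] (ℓ m : ℕ) (M : Matrix (Fin (ℓ + m)) (Fin (ℓ + m)) K) :
    Matrix (Fin m) (Fin m) K :=
  Matrix.of fun i j => M (Fin.natAdd ℓ i) (Fin.natAdd ℓ j)

/-- The block matrix `I_ℓ = [[1, 0], [0, 0]]` inside `M_{ℓ+m}(K)`. -/
def idL (K : Type*) [Semiring K] (ℓ m : ℕ) : Matrix (Fin (ℓ + m)) (Fin (ℓ + m)) K :=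
  Matrix.of fun i j => if i = j ∧ (i : ℕ) < ℓ then 1 else 0

section Aux

variable {K : Type*} [Field K] {n s : ℕ}

/-- Cayley–Hamilton: `x ^ n` is in the span of lower powers. -/
lemma pow_dim_mem_span (hn : 1 ≤ n) (x : Matrix (Fin n) (Fin n) K) :
    x ^ n ∈ Submodule.span K {M : Matrix (Fin n) (Fin n) K | ∃ i < n, M = x ^ i} := by
  have h0 := Matrix.aeval_self_charpoly x
  have hm : x.charpoly.Monic := x.charpoly_monic
  have hdeg : x.charpoly.natDegree = n := by
    simpa using x.charpoly_natDegree_eq_dim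
  have hsplit := x.charpoly.eraseLead_add_C_mul_X_pow
  rw [hm.leadingCoeff, Polynomial.C_1, one_mul, hdeg] at hsplit
  have h1 : x ^ n = - Polynomial.aeval x x.charpoly.eraseLead := by
    have h2 := congrArg (Polynomial.aeval x) hsplit
    simp only [map_add, Polynomial.aeval_X_pow, h0] at h2
    exact eq_neg_of_add_eq_zero_right h2
  have hlt : x.charpoly.eraseLead.natDegree < n := by
    have := x.charpoly.eraseLead_natDegree_le
    omega
  rw [h1, Polynomial.aeval_eq_sum_range' hlt x, ← Finset.sum_neg_distrib]
  refine Submodule.sum_mem _ fun i hi => ?_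
  rw [← neg_smul]
  exact Submodule.smul_mem _ _
    (Submodule.subset_span ⟨i, Finset.mem_range.mp hi, rfl⟩)

lemma pow_mem_span_lt (hn : 1 ≤ n) (x : Matrix (Fin n) (Fin n) K) {e : ℕ} (he : n ≤ e) :
    x ^ e ∈ Submodule.span K {M : Matrix (Fin n) (Fin n) K | ∃ i < e, M = x ^ i} := by
  have hx : x ^ e = x ^ (e - n) * x ^ n := by rw [← pow_add]; congr 1; omega
  have h2 : x ^ (e - n) * x ^ n ∈
      (Submodule.span K {M : Matrix (Fin n) (Fin n) K | ∃ i < n, M = x ^ i}).map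
        (LinearMap.mulLeft K (x ^ (e - n))) :=
    Submodule.mem_map_of_mem (pow_dim_mem_span hn x)
  rw [Submodule.map_span] at h2
  rw [hx]
  refine Submodule.span_mono ?_ h2
  rintro z ⟨y, ⟨i, hi, rfl⟩, rfl⟩
  exact ⟨e - n + i, by omega, by simp [LinearMap.mulLeft_apply, ← pow_add]⟩

end Aux

section Red

variable {K : Type*} [Field K] {s : ℕ}

/-- The generating set of restricted products, in list form. -/
def Sgen (K : Type*) [Field K] (n s : ℕ) (a : Fin s → Matrix (Fin n) (Fin n) K) :
    Set (Matrix (Fin n) (Fin n) K) :=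
  {M | ∃ L : List (Fin s × ℕ), (∀ pr ∈ L, 1 ≤ pr.2 ∧ pr.2 ≤ n - 1) ∧
    (L.map Prod.snd).sum ≤ n ^ 2 - 1 ∧
    M = (L.map fun pr => a pr.1 ^ pr.2).prod}

lemma reduction {n : ℕ} (a : Fin s → Matrix (Fin n) (Fin n) K) (hn : 2 ≤ n) :
    ∀ N (L : List (Fin s × ℕ)), (L.map Prod.snd).sum = N → (∀ pr ∈ L, 1 ≤ pr.2) →
    N ≤ n ^ 2 - 1 →
    (L.map fun pr => a pr.1 ^ pr.2).prod ∈ Submodule.span K (Sgen K n s a) := by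
  intro N
  induction N using Nat.strong_induction_on with
  | _ N ih =>
  intro L hsum h1 h2
  by_cases hall : ∀ pr ∈ L, pr.2 ≤ n - 1
  · exact Submodule.subset_span ⟨L, fun pr hpr => ⟨h1 pr hpr, hall pr hpr⟩, hsum ▸ h2, rfl⟩
  · push_neg at hall
    obtain ⟨pr, hmem, hbig⟩ := hall
    have hbig' : n ≤ pr.2 := by omega
    obtain ⟨L₁, L₂, rfl⟩ := List.append_of_mem hmem
    set f : Fin s × ℕ → Matrix (Fin n) (Fin n) K := fun pr => a pr.1 ^ pr.2 with hf
    have hprod : ((L₁ ++ pr :: L₂).map f).prod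
        = (L₁.map f).prod * (a pr.1 ^ pr.2 * (L₂.map f).prod) := by
      simp [List.map_append, List.prod_append, hf]
    have hsum' : (L₁.map Prod.snd).sum + pr.2 + (L₂.map Prod.snd).sum = N := by
      simp only [List.map_append, List.sum_append, List.map_cons, List.sum_cons] at hsum
      omega
    set g := (LinearMap.mulLeft K ((L₁.map f).prod)).comp
      (LinearMap.mulRight K ((L₂.map f).prod)) with hg
    have h3 : a pr.1 ^ pr.2
        ∈ Submodule.span K {M : Matrix (Fin n) (Fin n) K | ∃ i < pr.2, M = a pr.1 ^ i} :=
      pow_mem_span_lt (by omega) _ hbig'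
    have h4 := Submodule.mem_map_of_mem (f := g) h3
    rw [Submodule.map_span] at h4
    rw [hprod]
    have h5 : g (a pr.1 ^ pr.2) = (L₁.map f).prod * (a pr.1 ^ pr.2 * (L₂.map f).prod) := by
      simp [hg, mul_assoc]
    rw [← h5]
    refine Submodule.span_le.2 ?_ h4
    rintro z ⟨y, ⟨i, hi, rfl⟩, rfl⟩
    rcases Nat.eq_zero_or_pos i with hi0 | hi1
    · have hz : g (a pr.1 ^ i) = ((L₁ ++ L₂).map f).prod := by
        simp [hg, hi0, List.map_append, List.prod_append]
      rw [SetLike.mem_coe, hz]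
      refine ih (((L₁ ++ L₂).map Prod.snd).sum) ?_ _ rfl ?_ ?_
      · simp only [List.map_append, List.sum_append]; omega
      · intro q hq
        refine h1 q ?_
        simp only [List.mem_append, List.mem_cons] at hq ⊢
        tauto
      · simp only [List.map_append, List.sum_append]; omega
    · have hz : g (a pr.1 ^ i) = ((L₁ ++ (pr.1, i) :: L₂).map f).prod := by
        simp [hg, List.map_append, List.prod_append, hf, mul_assoc]
      rw [SetLike.mem_coe, hz]
      refine ih (((L₁ ++ (pr.1, i) :: L₂).map Prod.snd).sum) ?_ _ rfl ?_ ?_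
      · simp only [List.map_append, List.sum_append, List.map_cons, List.sum_cons]; omega
      · intro q hq
        simp only [List.mem_append, List.mem_cons] at hq
        rcases hq with hq | hq | hq
        · exact h1 q (by simp [hq])
        · subst hq; exact hi1
        · exact h1 q (by simp [hq])
      · simp only [List.map_append, List.sum_append, List.map_cons, List.sum_cons]; omega

end Red

/-- The `K`-subalgebra of `M_n(K)` generated by `a_1, …, a_s` is `K`-linearly
spanned by the products `a_{j_1}^{i_1} ⋯ a_{j_p}^{i_p}` with all exponents between `1` and
`n - 1` and total degree at most `n² - 1`. -/
theorem stmt11 (K : Type*) [Field K] (n s : ℕ) (hn : 2 ≤ n) (hs : 1 ≤ s)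
    (a : Fin s → Matrix (Fin n) (Fin n) K) :
    Subalgebra.toSubmodule (Algebra.adjoin K (Set.range a)) =
      Submodule.span K
        { M | ∃ (p : ℕ) (j : Fin p → Fin s) (e : Fin p → ℕ),
          (∀ r, 1 ≤ e r ∧ e r ≤ n - 1) ∧ (∑ r, e r) ≤ n ^ 2 - 1 ∧
          M = (List.ofFn fun r => a (j r) ^ e r).prod } := by
  classical
  have h1ne : (1 : Matrix (Fin n) (Fin n) K) ≠ 0 := by
    intro h
    have h2 := congrFun (congrFun h ⟨0, by omega⟩) ⟨0, by omega⟩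
    simp [Matrix.one_apply] at h2
  set V : ℕ → Submodule K (Matrix (Fin n) (Fin n) K) := fun k =>
    Submodule.span K {M | ∃ L : List (Fin s), L.length ≤ k ∧ M = (L.map a).prod} with hV
  have hVmono : Monotone V := fun k m hkm =>
    Submodule.span_mono fun M ⟨L, hL, hM⟩ => ⟨L, hL.trans hkm, hM⟩
  have hmul : ∀ (j : Fin s) k, (V k).map (LinearMap.mulLeft K (a j)) ≤ V (k + 1) := by
    intro j k
    rw [hV, Submodule.map_span]
    refine Submodule.span_le.2 ?_
    rintro z ⟨y, ⟨L, hL, rfl⟩, rfl⟩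
    exact Submodule.subset_span ⟨j :: L, by simpa using hL, by simp⟩
  have hword : ∀ L : List (Fin s), (L.map a).prod ∈ V L.length := fun L =>
    Submodule.subset_span ⟨L, le_rfl, rfl⟩
  have hstep : ∀ t, V t = V (t + 1) → V (t + 1) = V (t + 2) := by
    intro t ht
    refine le_antisymm (hVmono (by omega)) ?_
    refine Submodule.span_le.2 ?_
    rintro M ⟨L, hL, rfl⟩
    rw [SetLike.mem_coe]
    cases L with
    | nil => exact Submodule.subset_span ⟨[], by simp, rfl⟩
    | cons j L' =>
      have hL' : (L'.map a).prod ∈ V t := by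
        rw [ht]
        exact Submodule.subset_span ⟨L', by simp only [List.length_cons] at hL; omega, rfl⟩
      have h3 := hmul j t (Submodule.mem_map_of_mem hL')
      simpa using h3
  have hex : ∃ k ≤ n ^ 2 - 1, V k = V (k + 1) := by
    by_contra hcon
    push_neg at hcon
    have hrank : ∀ k, k ≤ n ^ 2 → k + 1 ≤ Module.finrank K (V k) := by
      intro k
      induction k with
      | zero =>
        intro _
        have h0 : (1 : Matrix (Fin n) (Fin n) K) ∈ V 0 :=
          Submodule.subset_span ⟨[], by simp, by simp⟩
        have hne : V 0 ≠ ⊥ := fun h => h1ne (by simpa [h] using h0)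
        have : Module.finrank K (V 0) ≠ 0 := fun hz => hne (Submodule.finrank_eq_zero.mp hz)
        omega
      | succ k ihk =>
        intro hk
        have hlt : V k < V (k + 1) :=
          lt_of_le_of_ne (hVmono (Nat.le_succ k)) (hcon k (by omega))
        have h4 := Submodule.finrank_lt_finrank_of_lt hlt
        have h5 := ihk (by omega)
        omega
    have hA := hrank (n ^ 2) le_rfl
    have h6 := Submodule.finrank_le (V (n ^ 2))
    have hfr : Module.finrank K (Matrix (Fin n) (Fin n) K) = n ^ 2 := by
      rw [Module.finrank_matrix]
      simp [sq]
    omega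
  obtain ⟨k, hk, hstabk⟩ := hex
  have hconsec : ∀ m, V (k + m) = V (k + m + 1) := by
    intro m
    induction m with
    | zero => simpa using hstabk
    | succ m ihm => exact hstep (k + m) ihm
  have hVle : ∀ m, V m ≤ V k := by
    intro m
    rcases le_total m k with h | h
    · exact hVmono h
    · have hkt : ∀ t, V (k + t) = V k := by
        intro t
        induction t with
        | zero => rfl
        | succ t iht => exact (hconsec t).symm.trans iht
      have h7 := hkt (m - k)
      rw [Nat.add_sub_cancel' h] at h7
      exact h7.le
  have hlist : ∀ l : List (Matrix (Fin n) (Fin n) K), (∀ y ∈ l, y ∈ Set.range a) →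
      ∃ L : List (Fin s), l.prod = (L.map a).prod := by
    intro l
    induction l with
    | nil => exact fun _ => ⟨[], by simp⟩
    | cons y t ih =>
      intro h
      obtain ⟨j, hj⟩ := h y List.mem_cons_self
      obtain ⟨L, hL⟩ := ih fun z hz => h z (List.mem_cons_of_mem _ hz)
      exact ⟨j :: L, by simp [hj, hL]⟩
  have hadj : Subalgebra.toSubmodule (Algebra.adjoin K (Set.range a)) ≤ V k := by
    rw [Algebra.adjoin_eq_span]
    refine Submodule.span_le.2 ?_
    intro x hx
    obtain ⟨l, hl, rfl⟩ := Submonoid.exists_list_of_mem_closure hx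
    obtain ⟨L, hL⟩ := hlist l hl
    rw [SetLike.mem_coe, hL]
    exact hVle L.length (hword L)
  have hVred : V (n ^ 2 - 1) ≤ Submodule.span K (Sgen K n s a) := by
    refine Submodule.span_le.2 ?_
    rintro M ⟨L, hL, rfl⟩
    rw [SetLike.mem_coe]
    have hred := reduction a hn (((L.map fun j => (j, 1)).map Prod.snd).sum)
      (L.map fun j => (j, 1)) rfl ?_ ?_
    · have heq : ((L.map fun j => (j, 1)).map fun pr : Fin s × ℕ => a pr.1 ^ pr.2)
          = L.map a := by
        simp [List.map_map, Function.comp_def]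
      rwa [heq] at hred
    · intro pr hpr
      simp only [List.mem_map] at hpr
      obtain ⟨j, -, rfl⟩ := hpr
      exact le_refl 1
    · have heq2 : ((L.map fun j => (j, 1)).map Prod.snd).sum = L.length := by
        simp [List.map_map, Function.comp_def]
      omega
  have hSgenS : Sgen K n s a ⊆
      { M | ∃ (p : ℕ) (j : Fin p → Fin s) (e : Fin p → ℕ),
          (∀ r, 1 ≤ e r ∧ e r ≤ n - 1) ∧ (∑ r, e r) ≤ n ^ 2 - 1 ∧
          M = (List.ofFn fun r => a (j r) ^ e r).prod } := by
    rintro M ⟨L, hcond, hsum, rfl⟩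
    refine ⟨L.length, fun r => (L.get r).1, fun r => (L.get r).2, ?_, ?_, ?_⟩
    · intro r
      exact hcond _ (List.get_mem L r)
    · have h9 : (List.ofFn L.get).map Prod.snd = List.ofFn fun r => (L.get r).2 := by
        simp [List.map_ofFn, Function.comp_def]
      calc (∑ r, (L.get r).2) = (List.ofFn fun r => (L.get r).2).sum := List.sum_ofFn.symm
        _ = (L.map Prod.snd).sum := by rw [← h9, List.ofFn_get]
        _ ≤ n ^ 2 - 1 := hsum
    · conv_lhs => rw [← List.ofFn_get L, List.map_ofFn]
      rfl
  have hge : Submodule.span K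
      { M | ∃ (p : ℕ) (j : Fin p → Fin s) (e : Fin p → ℕ),
          (∀ r, 1 ≤ e r ∧ e r ≤ n - 1) ∧ (∑ r, e r) ≤ n ^ 2 - 1 ∧
          M = (List.ofFn fun r => a (j r) ^ e r).prod }
      ≤ Subalgebra.toSubmodule (Algebra.adjoin K (Set.range a)) := by
    refine Submodule.span_le.2 ?_
    rintro M ⟨p, j, e, -, -, rfl⟩
    rw [SetLike.mem_coe, Subalgebra.mem_toSubmodule]
    refine Subalgebra.list_prod_mem _ ?_
    intro x hx
    rw [List.mem_ofFn] at hx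
    obtain ⟨r, rfl⟩ := hx
    have hmem : a (j r) ∈ Algebra.adjoin K (Set.range a) :=
      Algebra.subset_adjoin (Set.mem_range_self (j r))
    exact pow_mem hmem _
  refine le_antisymm ?_ hge
  exact hadj.trans ((hVmono hk).trans (hVred.trans (Submodule.span_mono hSgenS)))
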